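/- Let S be a finite interval of integers, let k < l be integers with {2k−1, 2k, …, 2l+1} ⊆ S, and let f ∈ Ξ̂_{k,l}. Then for every integer i with k ≤ i ≤ l, all of the following products are the zero operator on ℋ_S: Q(f) q_{2i} = 0, q_{2i} Q(f) = 0, Q(f) q_{2i}* = 0, and q_{2i}* Q(f) = 0, where q_{2i} = c_{2i+1} c*_{2i} c_{2i−1}. -/

import Mathlib

namespace Nicolai

/-- Configurations on the finite interval `S = {a, …, b}` of integers:
`true` = occupied, `false` = empty. -/
abbrev Config (a b : ℤ) : Type := {i : ℤ // i ∈ Finset.Icc a b} → Bool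

/-- The Hilbert space `ℋ_S` with orthonormal basis indexed by configurations. -/
abbrev Hs (a b : ℤ) : Type := EuclideanSpace ℂ (Config a b)

/-- The basis vector `e_g` associated to the configuration `g`. -/
noncomputable def e (a b : ℤ) (g : Config a b) : Hs a b := EuclideanSpace.single g 1

/-- The Jordan–Wigner sign exponent: the number of occupied sites strictly to the left of `i`. -/
noncomputable def signCount (a b : ℤ) (g : Config a b) (i : ℤ) : ℕ :=
  (Finset.univ.filter fun j : {x : ℤ // x ∈ Finset.Icc a b} => j.1 < i ∧ g j = true).card

/-- The annihilation operator `c_i` (zero if `i ∉ S`). -/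
noncomputable def cAnn (a b : ℤ) (i : ℤ) : Module.End ℂ (Hs a b) where
  toFun ψ := WithLp.toLp 2 fun g =>
    if hi : i ∈ Finset.Icc a b then
      if g ⟨i, hi⟩ = false then
        ((-1 : ℂ) ^ signCount a b g i) * ψ (Function.update g ⟨i, hi⟩ true)
      else 0
    else 0
  map_add' ψ φ := by
    ext g
    simp only [PiLp.add_apply, PiLp.toLp_apply]
    split_ifs <;> simp [mul_add]
  map_smul' c ψ := by
    ext g
    simp only [PiLp.smul_apply, PiLp.toLp_apply, smul_eq_mul, RingHom.id_apply]
    split_ifs <;> ring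

/-- The creation operator `c*_i` (zero if `i ∉ S`). -/
noncomputable def cCr (a b : ℤ) (i : ℤ) : Module.End ℂ (Hs a b) where
  toFun ψ := WithLp.toLp 2 fun g =>
    if hi : i ∈ Finset.Icc a b then
      if g ⟨i, hi⟩ = true then
        ((-1 : ℂ) ^ signCount a b g i) * ψ (Function.update g ⟨i, hi⟩ false)
      else 0
    else 0
  map_add' ψ φ := by
    ext g
    simp only [PiLp.add_apply, PiLp.toLp_apply]
    split_ifs <;> simp [mul_add]
  map_smul' c ψ := by
    ext g
    simp only [PiLp.smul_apply, PiLp.toLp_apply, smul_eq_mul, RingHom.id_apply]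
    split_ifs <;> ring

/-- `q_{2i} = c_{2i+1} c*_{2i} c_{2i−1}`. -/
noncomputable def qOp (a b i : ℤ) : Module.End ℂ (Hs a b) :=
  cAnn a b (2 * i + 1) * cCr a b (2 * i) * cAnn a b (2 * i - 1)

/-- The Nicolai supercharge `Q[k,l] = Σ_{i=k}^{l} q_{2i}`. -/
noncomputable def QNic (a b k l : ℤ) : Module.End ℂ (Hs a b) :=
  ∑ i ∈ Finset.Icc k l, qOp a b i

/-- Membership in `Ξ̂_{k,l}`: a `{−1,+1}`-valued function on `{2k, …, 2l}` with no
forbidden sign triplet at interior even sites, constant on each two-site edge. -/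
def memXi (k l : ℤ) (f : ℤ → ℤ) : Prop :=
  (∀ i ∈ Finset.Icc (2 * k) (2 * l), f i = 1 ∨ f i = -1) ∧
  (∀ i : ℤ, k < i → i < l →
    ¬(f (2 * i - 1) = -1 ∧ f (2 * i) = 1 ∧ f (2 * i + 1) = -1) ∧
    ¬(f (2 * i - 1) = 1 ∧ f (2 * i) = -1 ∧ f (2 * i + 1) = 1)) ∧
  f (2 * k) = f (2 * k + 1) ∧ f (2 * l - 1) = f (2 * l)

/-- `ζ_i(+1) = c*_i`, `ζ_i(−1) = c_i`. -/
noncomputable def zeta (a b i : ℤ) (v : ℤ) : Module.End ℂ (Hs a b) :=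
  if v = 1 then cCr a b i else if v = -1 then cAnn a b i else 0

/-- The local fermion operator `Q(f) = ζ_{2k}(f(2k)) ζ_{2k+1}(f(2k+1)) ⋯ ζ_{2l}(f(2l))`,
the product taken in increasing site order. -/
noncomputable def QF (a b k l : ℤ) (f : ℤ → ℤ) : Module.End ℂ (Hs a b) :=
  ((List.range (2 * l - 2 * k + 1).toNat).map
    (fun j => zeta a b (2 * k + (j : ℤ)) (f (2 * k + (j : ℤ))))).prod

/-- `g` has a forbidden triplet at the even site `2i`. -/
def forbiddenAt (g : ℤ → Bool) (i : ℤ) : Prop :=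
  (g (2 * i - 1) = false ∧ g (2 * i) = true ∧ g (2 * i + 1) = false) ∨
  (g (2 * i - 1) = true ∧ g (2 * i) = false ∧ g (2 * i + 1) = true)

/-- Membership in `Υ̂_{k,l}`: no forbidden triplet at interior even sites and the
open SUSY boundary condition (only the values on `{2k, …, 2l}` are relevant). -/
def memUps (k l : ℤ) (g : ℤ → Bool) : Prop :=
  (∀ i : ℤ, k < i → i < l → ¬ forbiddenAt g i) ∧
  g (2 * k) = g (2 * k + 1) ∧ g (2 * l - 1) = g (2 * l)

/-- Extend a configuration on `S` to all of `ℤ` by `false`. -/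
noncomputable def ext (a b : ℤ) (g : Config a b) : ℤ → Bool :=
  fun i => if h : i ∈ Finset.Icc a b then g ⟨i, h⟩ else false

/-- The charge `f ∈ Ξ̂_{k,l}` is applicable to the configuration `g`. -/
def applicable (k l : ℤ) (f : ℤ → ℤ) (g : ℤ → Bool) : Prop :=
  ∀ i : ℤ, 2 * k ≤ i → i ≤ 2 * l → (f i = 1 → g i = false) ∧ (f i = -1 → g i = true)

/-- The configuration `f·g` resulting from the action of the charge `f ∈ Ξ̂_{k,l}` on `g`. -/
def applyCharge (k l : ℤ) (f : ℤ → ℤ) (g : ℤ → Bool) : ℤ → Bool :=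
  fun i => if 2 * k ≤ i ∧ i ≤ 2 * l then decide (f i = 1) else g i

/-- `Reachable p q g₀ g`: `g` is obtained from `g₀` by finitely many applications of
applicable charges from `Ξ̂(p,q) = ⋃_{p ≤ k < l ≤ q} Ξ̂_{k,l}`. -/
inductive Reachable (p q : ℤ) : (ℤ → Bool) → (ℤ → Bool) → Prop
  | refl (g : ℤ → Bool) : Reachable p q g g
  | step {g₀ g : ℤ → Bool} (k l : ℤ) (f : ℤ → ℤ) :
      Reachable p q g₀ g → p ≤ k → k < l → l ≤ q → memXi k l f → applicable k l f g →
      Reachable p q g₀ (applyCharge k l f g)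

/-- The fermion parity operator `P e_g = (−1)^{#occupied sites} e_g`. -/
noncomputable def parity (a b : ℤ) : Module.End ℂ (Hs a b) where
  toFun ψ := WithLp.toLp 2 fun g =>
    ((-1 : ℂ) ^ (Finset.univ.filter fun j : {x : ℤ // x ∈ Finset.Icc a b} => g j = true).card)
      * ψ g
  map_add' ψ φ := by
    ext g
    simp only [PiLp.add_apply, PiLp.toLp_apply]
    ring
  map_smul' c ψ := by
    ext g
    simp only [PiLp.smul_apply, PiLp.toLp_apply, smul_eq_mul, RingHom.id_apply]
    ring


variable {a b : ℤ}

lemma signCount_update_self (g : Config a b) (p : {x : ℤ // x ∈ Finset.Icc a b}) (v : Bool) :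
    signCount a b (Function.update g p v) p.1 = signCount a b g p.1 := by
  unfold signCount
  congr 1
  apply Finset.filter_congr
  intro x _
  by_cases hx : x = p
  · subst hx; simp
  · simp [Function.update_of_ne hx]

lemma signCount_update (g : Config a b) (p : {x : ℤ // x ∈ Finset.Icc a b}) (m : ℤ)
    (hp : g p = false) :
    signCount a b (Function.update g p true) m
      = signCount a b g m + (if p.1 < m then 1 else 0) := by
  unfold signCount
  by_cases h : p.1 < m
  · rw [if_pos h]
    have he : (Finset.univ.filter fun x : {x : ℤ // x ∈ Finset.Icc a b} =>
        x.1 < m ∧ Function.update g p true x = true)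
        = insert p (Finset.univ.filter fun x : {x : ℤ // x ∈ Finset.Icc a b} =>
            x.1 < m ∧ g x = true) := by
      ext x
      by_cases hx : x = p
      · subst hx; simp [h, hp]
      · simp [Function.update_of_ne hx, hx]
    rw [he, Finset.card_insert_of_notMem (by simp [hp])]
  · rw [if_neg h, add_zero]
    congr 1
    apply Finset.filter_congr
    intro x _
    by_cases hx : x = p
    · subst hx; simp [h, hp]
    · simp [Function.update_of_ne hx]

lemma pow_signCount_update (g : Config a b) (p : {x : ℤ // x ∈ Finset.Icc a b}) (m : ℤ)
    (t : Bool) (hp : g p = t) :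
    ((-1 : ℂ) ^ signCount a b (Function.update g p (!t)) m)
      = (if p.1 < m then -1 else 1) * (-1) ^ signCount a b g m := by
  cases t
  · rw [show (!false) = true from rfl, signCount_update g p m hp, pow_add]
    split_ifs <;> simp [mul_comm]
  · rw [show (!true) = false from rfl]
    have h2 : g = Function.update (Function.update g p false) p true := by
      funext x
      by_cases hx : x = p
      · subst hx; simp [hp]
      · simp [Function.update_of_ne hx]
    conv_rhs => rw [h2]
    rw [signCount_update _ p m (by simp), pow_add]
    split_ifs <;> simp [pow_succ] <;> ring


noncomputable def cOf (a b : ℤ) (t : Bool) (i : ℤ) : Module.End ℂ (Hs a b) :=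
  bif t then cCr a b i else cAnn a b i

@[simp] lemma cOf_false (i : ℤ) : cOf a b false i = cAnn a b i := rfl
@[simp] lemma cOf_true (i : ℤ) : cOf a b true i = cCr a b i := rfl

lemma cOf_apply (t : Bool) (i : ℤ) (ψ : Hs a b) (g : Config a b) :
    cOf a b t i ψ g = if hi : i ∈ Finset.Icc a b then
      if g ⟨i, hi⟩ = t then
        ((-1 : ℂ) ^ signCount a b g i) * ψ (Function.update g ⟨i, hi⟩ (!t))
      else 0
    else 0 := by
  cases t <;> rfl

lemma cOf_sq (t : Bool) (i : ℤ) : cOf a b t i * cOf a b t i = 0 := by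
  apply LinearMap.ext; intro ψ; ext g
  rw [Module.End.mul_apply, cOf_apply]
  split_ifs with hi hg
  · rw [cOf_apply, dif_pos hi, if_neg (by simp)]
    simp
  · simp
  · simp

lemma cOf_anticomm (t₁ t₂ : Bool) (j m : ℤ) (hjm : j ≠ m) :
    cOf a b t₁ j * cOf a b t₂ m = -(cOf a b t₂ m * cOf a b t₁ j) := by
  apply LinearMap.ext; intro ψ; ext g
  rw [Module.End.mul_apply, LinearMap.neg_apply, PiLp.neg_apply, Module.End.mul_apply]
  simp only [cOf_apply]
  by_cases hj : j ∈ Finset.Icc a b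
  swap
  · by_cases hm : m ∈ Finset.Icc a b
    · rw [dif_neg hj, dif_pos hm, dif_neg hj]
      split_ifs <;> simp
    · rw [dif_neg hj, dif_neg hm, neg_zero]
  by_cases hm : m ∈ Finset.Icc a b
  swap
  · rw [dif_pos hj, dif_neg hm, dif_neg hm]
    split_ifs <;> simp
  rw [dif_pos hj, dif_pos hm, dif_pos hm, dif_pos hj]
  have hne : (⟨j, hj⟩ : {x : ℤ // x ∈ Finset.Icc a b}) ≠ ⟨m, hm⟩ :=
    fun h => hjm (congrArg Subtype.val h)
  have e1 : Function.update g ⟨j, hj⟩ (!t₁) ⟨m, hm⟩ = g ⟨m, hm⟩ :=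
    Function.update_of_ne hne.symm _ _
  have e2 : Function.update g ⟨m, hm⟩ (!t₂) ⟨j, hj⟩ = g ⟨j, hj⟩ :=
    Function.update_of_ne hne _ _
  by_cases hgj : g ⟨j, hj⟩ = t₁
  swap
  · have h2 : ¬ (Function.update g ⟨m, hm⟩ (!t₂) ⟨j, hj⟩ = t₁) := by rw [e2]; exact hgj
    rw [if_neg hgj, if_neg h2]
    split_ifs <;> simp
  by_cases hgm : g ⟨m, hm⟩ = t₂
  swap
  · have h1 : ¬ (Function.update g ⟨j, hj⟩ (!t₁) ⟨m, hm⟩ = t₂) := by rw [e1]; exact hgm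
    rw [if_pos hgj, if_neg hgm, if_neg h1, mul_zero, neg_zero]
  have p1 : Function.update g ⟨j, hj⟩ (!t₁) ⟨m, hm⟩ = t₂ := by rw [e1]; exact hgm
  have p2 : Function.update g ⟨m, hm⟩ (!t₂) ⟨j, hj⟩ = t₁ := by rw [e2]; exact hgj
  rw [if_pos hgj, if_pos hgm, if_pos p1, if_pos p2,
    pow_signCount_update g ⟨j, hj⟩ m t₁ hgj,
    pow_signCount_update g ⟨m, hm⟩ j t₂ hgm,
    Function.update_comm hne]
  have hc1 : ((⟨j, hj⟩ : {x : ℤ // x ∈ Finset.Icc a b}) : ℤ) = j := rfl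
  have hc2 : ((⟨m, hm⟩ : {x : ℤ // x ∈ Finset.Icc a b}) : ℤ) = m := rfl
  simp only [hc1, hc2]
  rcases lt_or_gt_of_ne hjm with h | h
  · rw [if_pos h, if_neg (by omega)]
    ring
  · rw [if_neg (by omega), if_pos h]
    ring

@[simp] lemma zeta_one (i : ℤ) : zeta a b i 1 = cCr a b i := by simp [zeta]

@[simp] lemma zeta_neg_one (i : ℤ) : zeta a b i (-1) = cAnn a b i := by norm_num [zeta]

lemma zeta_cases (i v : ℤ) : zeta a b i v = 0 ∨ ∃ t, zeta a b i v = cOf a b t i := by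
  unfold zeta
  split_ifs
  · exact Or.inr ⟨true, rfl⟩
  · exact Or.inr ⟨false, rfl⟩
  · exact Or.inl rfl

lemma zeta_sq (i v : ℤ) : zeta a b i v * zeta a b i v = 0 := by
  rcases zeta_cases (a := a) (b := b) i v with h | ⟨t, h⟩ <;> rw [h]
  · simp
  · exact cOf_sq t i

lemma zeta_anticomm (j m : ℤ) (hjm : j ≠ m) (v w : ℤ) :
    zeta a b j v * zeta a b m w = -(zeta a b m w * zeta a b j v) := by
  rcases zeta_cases (a := a) (b := b) j v with h1 | ⟨t₁, h1⟩ <;>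
    rcases zeta_cases (a := a) (b := b) m w with h2 | ⟨t₂, h2⟩ <;> rw [h1, h2]
  · simp
  · simp
  · simp
  · exact cOf_anticomm t₁ t₂ j m hjm

lemma prod_anticomm {V : Type*} [AddCommGroup V] [Module ℂ V]
    (T : Module.End ℂ V) (L : List (Module.End ℂ V))
    (h : ∀ A ∈ L, T * A = -(A * T)) :
    T * L.prod = L.prod * T ∨ T * L.prod = -(L.prod * T) := by
  induction L with
  | nil => left; simp
  | cons A L ih =>
    have hA := h A (by simp)
    have hih := ih (fun B hB => h B (by simp [hB]))
    rw [List.prod_cons]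
    rcases hih with h1 | h1
    · right
      calc T * (A * L.prod) = -(A * (T * L.prod)) := by
            rw [← mul_assoc, hA, neg_mul, mul_assoc]
        _ = -(A * L.prod * T) := by rw [h1, mul_assoc]
    · left
      calc T * (A * L.prod) = -(A * (T * L.prod)) := by
            rw [← mul_assoc, hA, neg_mul, mul_assoc]
        _ = A * L.prod * T := by rw [h1, mul_neg, neg_neg, mul_assoc]

lemma prod_dup_zero {V : Type*} [AddCommGroup V] [Module ℂ V]
    (P Q R : List (Module.End ℂ V)) (T : Module.End ℂ V) (hT : T * T = 0)
    (h : ∀ A ∈ Q, T * A = -(A * T)) :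
    (P ++ T :: (Q ++ T :: R)).prod = 0 := by
  rw [List.prod_append, List.prod_cons, List.prod_append, List.prod_cons]
  have key : T * (Q.prod * (T * R.prod)) = 0 := by
    rcases prod_anticomm T Q h with h1 | h1
    · rw [← mul_assoc, h1, mul_assoc, ← mul_assoc T, hT, zero_mul, mul_zero]
    · rw [← mul_assoc, h1, neg_mul, mul_assoc, ← mul_assoc T, hT, zero_mul, mul_zero, neg_zero]
  rw [key, mul_zero]

lemma range_map_split {α : Type*} (F : ℕ → α) (j n : ℕ) (h : j < n) :
    (List.range n).map F
      = ((List.range j).map F) ++ F j :: ((List.range (n - j - 1)).map fun x => F (j + 1 + x)) := by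
  have hn : n = j + (1 + (n - j - 1)) := by omega
  rw [hn, List.range_add, List.map_append, List.map_map, List.range_add,
    show List.range 1 = [0] from rfl, List.map_append, List.map_map]
  simp only [List.map_cons, List.map_nil, List.cons_append, List.nil_append,
    Function.comp_apply]
  have h2 : j + (1 + (n - j - 1)) - j - 1 = n - j - 1 := by omega
  rw [h2]
  congr 1
  have h3 : j + 0 = j := rfl
  rw [h3]
  refine congrArg _ (List.map_congr_left fun x _ => ?_)
  simp only [Function.comp_apply]
  congr 1
  omega

lemma QF_eq_natmap (a b k l : ℤ) (f : ℤ → ℤ) :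
    QF a b k l f = ((List.range (2 * l - 2 * k + 1).toNat).map
      (fun j : ℕ => zeta a b (2 * k + (j : ℤ)) (f (2 * k + (j : ℤ))))).prod := by
  unfold QF
  congr 1
  induction (List.range (2 * l - 2 * k + 1).toNat) with
  | nil => rfl
  | cons x L ih => simp only [List.map_cons] at *; rw [← ih]; rfl

lemma QF_list (a b k l : ℤ) (f : ℤ → ℤ) (s : ℤ) (hs1 : 2*k ≤ s) (hs2 : s ≤ 2*l) :
    QF a b k l f = ((List.range (s - 2*k).toNat).map
        (fun j : ℕ => zeta a b (2*k + (j:ℤ)) (f (2*k + (j:ℤ)))) ++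
      zeta a b s (f s) ::
      (List.range (2*l - s).toNat).map
        (fun x : ℕ => zeta a b (s + 1 + (x:ℤ)) (f (s + 1 + (x:ℤ))))).prod := by
  rw [QF_eq_natmap]
  congr 1
  have h := range_map_split (fun j : ℕ => zeta a b (2*k + (j:ℤ)) (f (2*k + (j:ℤ))))
      (s - 2*k).toNat (2*l - 2*k + 1).toNat (by omega)
  rw [h]
  have e1 : ((2*l - 2*k + 1).toNat - (s - 2*k).toNat - 1) = (2*l - s).toNat := by omega
  rw [e1]
  congr 1
  congr 1
  · have e0 : (2*k + (((s - 2*k).toNat : ℕ) : ℤ)) = s := by omega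
    simp only [e0]
  · refine List.map_congr_left fun x _ => ?_
    have e2 : (2*k + ((((s - 2*k).toNat + 1 + x : ℕ)) : ℤ)) = s + 1 + (x:ℤ) := by
      push_cast; omega
    simp only [e2]

lemma QF_kill_left (a b k l : ℤ) (f : ℤ → ℤ)
    (pre post : List (Module.End ℂ (Hs a b))) (s v : ℤ)
    (hs1 : 2*k ≤ s) (hs2 : s ≤ 2*l) (hfs : f s = v)
    (hpre : ∀ A ∈ pre, zeta a b s v * A = -(A * zeta a b s v)) :
    QF a b k l f * (pre ++ zeta a b s v :: post).prod = 0 := by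
  rw [QF_list a b k l f s hs1 hs2, hfs, ← List.prod_append]
  have hl : ((List.range (s - 2*k).toNat).map
        (fun j : ℕ => zeta a b (2*k + (j:ℤ)) (f (2*k + (j:ℤ)))) ++
      zeta a b s v ::
      (List.range (2*l - s).toNat).map
        (fun x : ℕ => zeta a b (s + 1 + (x:ℤ)) (f (s + 1 + (x:ℤ))))) ++
      (pre ++ zeta a b s v :: post)
      = (List.range (s - 2*k).toNat).map
        (fun j : ℕ => zeta a b (2*k + (j:ℤ)) (f (2*k + (j:ℤ)))) ++
        zeta a b s v ::
        ((((List.range (2*l - s).toNat).map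
          (fun x : ℕ => zeta a b (s + 1 + (x:ℤ)) (f (s + 1 + (x:ℤ))))) ++ pre)
         ++ zeta a b s v :: post) := by simp
  rw [hl]
  refine prod_dup_zero _ _ _ _ (zeta_sq s v) ?_
  intro A hA
  rcases List.mem_append.mp hA with hA | hA
  · rcases List.mem_map.mp hA with ⟨x, hx, rfl⟩
    exact zeta_anticomm s (s + 1 + (x:ℤ)) (by omega) v _
  · exact hpre A hA

lemma QF_kill_right (a b k l : ℤ) (f : ℤ → ℤ)
    (pre post : List (Module.End ℂ (Hs a b))) (s v : ℤ)
    (hs1 : 2*k ≤ s) (hs2 : s ≤ 2*l) (hfs : f s = v)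
    (hpost : ∀ A ∈ post, zeta a b s v * A = -(A * zeta a b s v)) :
    (pre ++ zeta a b s v :: post).prod * QF a b k l f = 0 := by
  rw [QF_list a b k l f s hs1 hs2, hfs, ← List.prod_append]
  have hl : (pre ++ zeta a b s v :: post) ++
      ((List.range (s - 2*k).toNat).map
        (fun j : ℕ => zeta a b (2*k + (j:ℤ)) (f (2*k + (j:ℤ)))) ++
      zeta a b s v ::
      (List.range (2*l - s).toNat).map
        (fun x : ℕ => zeta a b (s + 1 + (x:ℤ)) (f (s + 1 + (x:ℤ)))))
      = pre ++ zeta a b s v ::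
        ((post ++ (List.range (s - 2*k).toNat).map
          (fun j : ℕ => zeta a b (2*k + (j:ℤ)) (f (2*k + (j:ℤ)))))
         ++ zeta a b s v ::
          (List.range (2*l - s).toNat).map
            (fun x : ℕ => zeta a b (s + 1 + (x:ℤ)) (f (s + 1 + (x:ℤ))))) := by simp
  rw [hl]
  refine prod_dup_zero _ _ _ _ (zeta_sq s v) ?_
  intro A hA
  rcases List.mem_append.mp hA with hA | hA
  · exact hpost A hA
  · rcases List.mem_map.mp hA with ⟨x, hx, rfl⟩
    have hx' := List.mem_range.mp hx
    exact zeta_anticomm s (2*k + (x:ℤ)) (by omega) v _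

noncomputable def flipAt (p : {x : ℤ // x ∈ Finset.Icc a b}) : Equiv (Config a b) (Config a b) where
  toFun g := Function.update g p (!(g p))
  invFun g := Function.update g p (!(g p))
  left_inv g := by
    funext x
    by_cases hx : x = p
    · subst hx; simp
    · simp [Function.update_of_ne hx]
  right_inv g := by
    funext x
    by_cases hx : x = p
    · subst hx; simp
    · simp [Function.update_of_ne hx]

lemma conj_neg_one_pow (n : ℕ) : (starRingEnd ℂ) ((-1) ^ n) = (-1) ^ n := by
  rw [map_pow, map_neg, map_one]

lemma adjoint_cOf (t : Bool) (i : ℤ) :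
    LinearMap.adjoint (cOf a b t i) = cOf a b (!t) i := by
  symm
  rw [LinearMap.eq_adjoint_iff]
  intro x y
  simp only [PiLp.inner_apply, RCLike.inner_apply]
  by_cases hi : i ∈ Finset.Icc a b
  swap
  · simp only [cOf_apply, dif_neg hi]
    simp
  refine Fintype.sum_bijective (flipAt (a := a) (b := b) ⟨i, hi⟩) (Equiv.bijective _) _ _ ?_
  intro g
  simp only [cOf_apply, dif_pos hi]
  have hflip : flipAt (a := a) (b := b) ⟨i, hi⟩ g
      = Function.update g ⟨i, hi⟩ (!(g ⟨i, hi⟩)) := rfl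
  by_cases hg : g ⟨i, hi⟩ = !t
  · rw [if_pos hg, hflip, hg]
    have h1 : Function.update g ⟨i, hi⟩ (!(!t)) ⟨i, hi⟩ = !(!t) := Function.update_self _ _ _
    rw [if_pos (by rw [h1, Bool.not_not])]
    have h2 : signCount a b (Function.update g ⟨i, hi⟩ (!(!t))) i = signCount a b g i := by
      have := signCount_update_self (a := a) (b := b) g ⟨i, hi⟩ (!(!t))
      exact this
    have h3 : Function.update (Function.update g ⟨i, hi⟩ (!(!t))) ⟨i, hi⟩ (!t) = g := by
      funext z
      by_cases hz : z = ⟨i, hi⟩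
      · subst hz; rw [Function.update_self, hg]
      · rw [Function.update_of_ne hz, Function.update_of_ne hz]
    rw [h2, h3, Bool.not_not]
    rw [map_mul, conj_neg_one_pow]
    ring
  · rw [if_neg hg, hflip]
    have h1 : Function.update g ⟨i, hi⟩ (!(g ⟨i, hi⟩)) ⟨i, hi⟩ = !(g ⟨i, hi⟩) :=
      Function.update_self _ _ _
    have h4 : ¬ (Function.update g ⟨i, hi⟩ (!(g ⟨i, hi⟩)) ⟨i, hi⟩ = t) := by
      rw [h1]
      cases ht : g ⟨i, hi⟩ <;> cases t <;> simp_all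
    rw [if_neg h4]
    simp

lemma adjoint_cAnn (i : ℤ) : LinearMap.adjoint (cAnn a b i) = cCr a b i := by
  have h := adjoint_cOf (a := a) (b := b) false i
  simpa using h

lemma adjoint_cCr (i : ℤ) : LinearMap.adjoint (cCr a b i) = cAnn a b i := by
  have h := adjoint_cOf (a := a) (b := b) true i
  simpa using h

lemma adjoint_qOp (i : ℤ) : LinearMap.adjoint (qOp a b i)
    = zeta a b (2 * i - 1) 1 * (zeta a b (2 * i) (-1) * zeta a b (2 * i + 1) 1) := by
  unfold qOp
  rw [Module.End.mul_eq_comp, Module.End.mul_eq_comp, LinearMap.adjoint_comp,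
    LinearMap.adjoint_comp, adjoint_cAnn, adjoint_cCr, adjoint_cAnn]
  rw [zeta_one, zeta_neg_one, zeta_one]
  rfl

lemma kill_cases_ann (k l i : ℤ) (f : ℤ → ℤ) (hf : memXi k l f) (hkl : k < l)
    (hki : k ≤ i) (hil : i ≤ l) :
    f (2 * i) = 1 ∨ (i < l ∧ f (2 * i + 1) = -1) ∨ (k < i ∧ f (2 * i - 1) = -1) := by
  obtain ⟨hr, hforb, hbk, hbl⟩ := hf
  rcases hr (2 * i) (by rw [Finset.mem_Icc]; omega) with h0 | h0
  · exact Or.inl h0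
  by_cases hik : i = k
  · subst hik
    refine Or.inr (Or.inl ⟨hkl, ?_⟩)
    rw [← hbk]; exact h0
  by_cases hilq : i = l
  · subst hilq
    refine Or.inr (Or.inr ⟨by omega, ?_⟩)
    rw [hbl]; exact h0
  have hint := hforb i (by omega) (by omega)
  rcases hr (2 * i - 1) (by rw [Finset.mem_Icc]; omega) with h1 | h1
  · rcases hr (2 * i + 1) (by rw [Finset.mem_Icc]; omega) with h2 | h2
    · exact absurd ⟨h1, h0, h2⟩ hint.2
    · exact Or.inr (Or.inl ⟨by omega, h2⟩)
  · exact Or.inr (Or.inr ⟨by omega, h1⟩)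

lemma kill_cases_cr (k l i : ℤ) (f : ℤ → ℤ) (hf : memXi k l f) (hkl : k < l)
    (hki : k ≤ i) (hil : i ≤ l) :
    f (2 * i) = -1 ∨ (i < l ∧ f (2 * i + 1) = 1) ∨ (k < i ∧ f (2 * i - 1) = 1) := by
  obtain ⟨hr, hforb, hbk, hbl⟩ := hf
  rcases hr (2 * i) (by rw [Finset.mem_Icc]; omega) with h0 | h0
  swap
  · exact Or.inl h0
  by_cases hik : i = k
  · subst hik
    refine Or.inr (Or.inl ⟨hkl, ?_⟩)
    rw [← hbk]; exact h0
  by_cases hilq : i = l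
  · subst hilq
    refine Or.inr (Or.inr ⟨by omega, ?_⟩)
    rw [hbl]; exact h0
  have hint := hforb i (by omega) (by omega)
  rcases hr (2 * i - 1) (by rw [Finset.mem_Icc]; omega) with h1 | h1
  · exact Or.inr (Or.inr ⟨by omega, h1⟩)
  · rcases hr (2 * i + 1) (by rw [Finset.mem_Icc]; omega) with h2 | h2
    · exact Or.inr (Or.inl ⟨by omega, h2⟩)
    · exact absurd ⟨h1, h0, h2⟩ hint.1


/-- for `f ∈ Ξ̂_{k,l}` and `k ≤ i ≤ l`, all products of `Q(f)` (or its
adjoint) with `q_{2i}` (or its adjoint) vanish. -/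
theorem local_charge_annihilates_q (a b k l : ℤ) (hkl : k < l)
    (hS : Finset.Icc (2 * k - 1) (2 * l + 1) ⊆ Finset.Icc a b)
    (f : ℤ → ℤ) (hf : memXi k l f) (i : ℤ) (hki : k ≤ i) (hil : i ≤ l) :
    QF a b k l f * qOp a b i = 0 ∧
    qOp a b i * QF a b k l f = 0 ∧
    QF a b k l f * LinearMap.adjoint (qOp a b i) = 0 ∧
    LinearMap.adjoint (qOp a b i) * QF a b k l f = 0 := by
  have hq0 : qOp a b i
      = ([zeta a b (2*i+1) (-1)] ++ zeta a b (2*i) 1 :: [zeta a b (2*i-1) (-1)]).prod := by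
    simp [qOp, mul_assoc]
  have hq1 : qOp a b i
      = (([] : List (Module.End ℂ (Hs a b))) ++ zeta a b (2*i+1) (-1) ::
          [zeta a b (2*i) 1, zeta a b (2*i-1) (-1)]).prod := by
    simp [qOp, mul_assoc]
  have hq2 : qOp a b i
      = ([zeta a b (2*i+1) (-1), zeta a b (2*i) 1] ++ zeta a b (2*i-1) (-1) ::
          ([] : List (Module.End ℂ (Hs a b)))).prod := by
    simp [qOp, mul_assoc]
  have ha0 : LinearMap.adjoint (qOp a b i)
      = ([zeta a b (2*i-1) 1] ++ zeta a b (2*i) (-1) :: [zeta a b (2*i+1) 1]).prod := by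
    rw [adjoint_qOp]; simp [mul_assoc]
  have ha1 : LinearMap.adjoint (qOp a b i)
      = ([zeta a b (2*i-1) 1, zeta a b (2*i) (-1)] ++ zeta a b (2*i+1) 1 ::
          ([] : List (Module.End ℂ (Hs a b)))).prod := by
    rw [adjoint_qOp]; simp [mul_assoc]
  have ha2 : LinearMap.adjoint (qOp a b i)
      = (([] : List (Module.End ℂ (Hs a b))) ++ zeta a b (2*i-1) 1 ::
          [zeta a b (2*i) (-1), zeta a b (2*i+1) 1]).prod := by
    rw [adjoint_qOp]; simp [mul_assoc]
  refine ⟨?_, ?_, ?_, ?_⟩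
  · rcases kill_cases_ann k l i f hf hkl hki hil with h | ⟨hc, h⟩ | ⟨hc, h⟩
    · rw [hq0]
      refine QF_kill_left a b k l f _ _ (2*i) 1 (by omega) (by omega) h ?_
      intro A hA
      rw [List.mem_singleton] at hA; subst hA
      exact zeta_anticomm _ _ (by omega) _ _
    · rw [hq1]
      exact QF_kill_left a b k l f _ _ (2*i+1) (-1) (by omega) (by omega) h (by simp)
    · rw [hq2]
      refine QF_kill_left a b k l f _ _ (2*i-1) (-1) (by omega) (by omega) h ?_
      intro A hA
      rcases List.mem_cons.mp hA with hA | hA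
      · subst hA; exact zeta_anticomm _ _ (by omega) _ _
      · rw [List.mem_singleton] at hA; subst hA
        exact zeta_anticomm _ _ (by omega) _ _
  · rcases kill_cases_ann k l i f hf hkl hki hil with h | ⟨hc, h⟩ | ⟨hc, h⟩
    · rw [hq0]
      refine QF_kill_right a b k l f _ _ (2*i) 1 (by omega) (by omega) h ?_
      intro A hA
      rw [List.mem_singleton] at hA; subst hA
      exact zeta_anticomm _ _ (by omega) _ _
    · rw [hq1]
      refine QF_kill_right a b k l f _ _ (2*i+1) (-1) (by omega) (by omega) h ?_
      intro A hA
      rcases List.mem_cons.mp hA with hA | hA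
      · subst hA; exact zeta_anticomm _ _ (by omega) _ _
      · rw [List.mem_singleton] at hA; subst hA
        exact zeta_anticomm _ _ (by omega) _ _
    · rw [hq2]
      exact QF_kill_right a b k l f _ _ (2*i-1) (-1) (by omega) (by omega) h (by simp)
  · rcases kill_cases_cr k l i f hf hkl hki hil with h | ⟨hc, h⟩ | ⟨hc, h⟩
    · rw [ha0]
      refine QF_kill_left a b k l f _ _ (2*i) (-1) (by omega) (by omega) h ?_
      intro A hA
      rw [List.mem_singleton] at hA; subst hA
      exact zeta_anticomm _ _ (by omega) _ _
    · rw [ha1]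
      refine QF_kill_left a b k l f _ _ (2*i+1) 1 (by omega) (by omega) h ?_
      intro A hA
      rcases List.mem_cons.mp hA with hA | hA
      · subst hA; exact zeta_anticomm _ _ (by omega) _ _
      · rw [List.mem_singleton] at hA; subst hA
        exact zeta_anticomm _ _ (by omega) _ _
    · rw [ha2]
      exact QF_kill_left a b k l f _ _ (2*i-1) 1 (by omega) (by omega) h (by simp)
  · rcases kill_cases_cr k l i f hf hkl hki hil with h | ⟨hc, h⟩ | ⟨hc, h⟩
    · rw [ha0]
      refine QF_kill_right a b k l f _ _ (2*i) (-1) (by omega) (by omega) h ?_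
      intro A hA
      rw [List.mem_singleton] at hA; subst hA
      exact zeta_anticomm _ _ (by omega) _ _
    · rw [ha1]
      exact QF_kill_right a b k l f _ _ (2*i+1) 1 (by omega) (by omega) h (by simp)
    · rw [ha2]
      refine QF_kill_right a b k l f _ _ (2*i-1) 1 (by omega) (by omega) h ?_
      intro A hA
      rcases List.mem_cons.mp hA with hA | hA
      · subst hA; exact zeta_anticomm _ _ (by omega) _ _
      · rw [List.mem_singleton] at hA; subst hA
        exact zeta_anticomm _ _ (by omega) _ _


end Nicolai
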